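/- arXiv:1702.04475 — 5 statements merged into one kernel-verified Lean document; each statement's English description precedes it below -/
import Mathlib

section
/- Let T be a triangulated category, S a thick subcategory with a torsion pair S = X ⊥ Y, and suppose T has torsion pairs T = X ⊥ X^⊥ = ^⊥Y ⊥ Y. Then for every object T₀ of T there exists an object Z₀ in Z := X^⊥ ∩ ^⊥(Y[1]) such that T₀ and Z₀ become isomorphic in the Verdier quotient U = T/S. -/
open CategoryTheory Limits Pretriangulated ZeroObject

namespace IY

variable {T : Type*} [Category T] [Preadditive T] [HasZeroObject T] [HasShift T ℤ]
  [∀ n : ℤ, (shiftFunctor T n).Additive] [Pretriangulated T]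

/-- Right Hom-orthogonal: `A^⊥`. -/
def rightPerp (A : Set T) : Set T := {Y | ∀ X ∈ A, ∀ f : X ⟶ Y, f = 0}

/-- Left Hom-orthogonal: `^⊥B`. -/
def leftPerp (B : Set T) : Set T := {X | ∀ Y ∈ B, ∀ f : X ⟶ Y, f = 0}

/-- The shift `A[n]` of a class of objects. -/
def shiftSet (A : Set T) (n : ℤ) : Set T := (fun X => (X⟦n⟧ : T)) '' A

/-- `Hom(A, B) = 0`. -/
def homOrth (A B : Set T) : Prop := ∀ X ∈ A, ∀ Y ∈ B, ∀ f : X ⟶ Y, f = 0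

/-- `A * B`: objects `E` admitting a distinguished triangle `A → E → B → A[1]`
with `A ∈ A`, `B ∈ B`. -/
def starSet (A B : Set T) : Set T :=
  {E | ∃ (a b : T) (_ : a ∈ A) (_ : b ∈ B) (f : a ⟶ E) (g : E ⟶ b)
    (h : b ⟶ a⟦(1 : ℤ)⟧), Triangle.mk f g h ∈ distTriang T}

/-- A torsion pair `S = A ⊥ B` on the class of objects `S`:
`S = A * B`, `Hom(A,B) = 0`, `A = ^⊥B ∩ S` and `B = A^⊥ ∩ S`. -/
structure IsTorsionPair (S A B : Set T) : Prop where
  subA : A ⊆ S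
  subB : B ⊆ S
  orth : homOrth A B
  ext : S ⊆ starSet A B
  eqA : A = leftPerp B ∩ S
  eqB : B = rightPerp A ∩ S

/-- A thick subcategory: closed under isomorphisms, shifts, extensions (cones) and
direct summands (retracts), and contains the zero object. -/
structure IsThick (S : Set T) : Prop where
  zero : (0 : T) ∈ S
  iso : ∀ ⦃X Y : T⦄, (X ≅ Y) → X ∈ S → Y ∈ S
  shift : ∀ X ∈ S, ∀ n : ℤ, (X⟦n⟧ : T) ∈ S
  ext₂ : ∀ Tr : Triangle T, Tr ∈ (distTriang T) → Tr.obj₁ ∈ S → Tr.obj₃ ∈ S → Tr.obj₂ ∈ S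
  retract : ∀ ⦃X Y : T⦄ (i : X ⟶ Y) (r : Y ⟶ X), i ≫ r = 𝟙 X → Y ∈ S → X ∈ S

/-- The class of morphisms whose cone lies in `S`; the Verdier quotient `T/S` is the
localization of `T` at this class. -/
def qis (S : Set T) : MorphismProperty T := fun X Y f =>
  ∃ (Z : T) (g : Y ⟶ Z) (h : Z ⟶ X⟦(1 : ℤ)⟧),
    Triangle.mk f g h ∈ (distTriang T) ∧ Z ∈ S

/-- A morphism factors through an object of `P`. -/
def factorsThrough (P : Set T) {M N : T} (f : M ⟶ N) : Prop :=
  ∃ (P₀ : T) (_ : P₀ ∈ P) (g : M ⟶ P₀) (h : P₀ ⟶ N), g ≫ h = f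



/-- Every object of `T` becomes isomorphic in the Verdier quotient
`U = T/S` to an object of `Z = X^⊥ ∩ ^⊥(Y[1])`. -/
theorem stmt1 {U : Type*} [Category U] (S X Y : Set T) (Q : T ⥤ U)
    [Q.IsLocalization (qis S)] (hS : IsThick S)
    (h1 : IsTorsionPair S X Y)
    (h2 : IsTorsionPair Set.univ X (rightPerp X))
    (h3 : IsTorsionPair Set.univ (leftPerp Y) Y) (T₀ : T) :
    ∃ Z₀ ∈ rightPerp X ∩ leftPerp (shiftSet Y 1), Nonempty (Q.obj T₀ ≅ Q.obj Z₀) := by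
  -- Step 1: decompose T₀ via the torsion pair (X, X^⊥)
  obtain ⟨x₀, t₁, hx₀, ht₁, f₁, g₁, k₁, hTr1⟩ := h2.ext (Set.mem_univ T₀)
  -- Q.map g₁ is iso: cone of g₁ is x₀⟦1⟧ ∈ S
  have hqis₁ : qis S g₁ :=
    ⟨x₀⟦(1:ℤ)⟧, k₁, -f₁⟦(1:ℤ)⟧', rot_of_distTriang _ hTr1,
      hS.shift _ (h1.subA hx₀) 1⟩
  have hiso₁ : IsIso (Q.map g₁) := Localization.inverts Q (qis S) g₁ hqis₁
  -- Step 2: decompose t₁⟦-1⟧ via the torsion pair (^⊥Y, Y)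
  obtain ⟨a, b, ha, hb, f₂, g₂, k₂, hTr2⟩ := h3.ext (Set.mem_univ (t₁⟦(-1:ℤ)⟧))
  set Tr2 : Triangle T := Triangle.mk f₂ g₂ k₂ with hTr2def
  have hTr2s := Triangle.shift_distinguished Tr2 hTr2 1
  set Tr2s := (CategoryTheory.shiftFunctor (Triangle T) (1:ℤ)).obj Tr2 with hTr2sdef
  have e : (t₁⟦(-1:ℤ)⟧)⟦(1:ℤ)⟧ ≅ t₁ := shiftNegShift t₁ 1
  -- the candidate object
  refine ⟨a⟦(1:ℤ)⟧, ⟨?_, ?_⟩, ?_⟩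
  · -- a⟦1⟧ ∈ X^⊥
    intro x hx φ
    have hrot := rot_of_distTriang _ (rot_of_distTriang _ hTr2)
    have hcomp : φ ≫ (Tr2.rotate.rotate).mor₂ = 0 := by
      have h0 : (φ ≫ f₂⟦(1:ℤ)⟧') ≫ e.hom = 0 := ht₁ x hx _
      have : φ ≫ f₂⟦(1:ℤ)⟧' = 0 := by
        rw [← cancel_mono e.hom, zero_comp]; exact h0
      dsimp [Triangle.rotate]
      change φ ≫ (-(f₂⟦(1:ℤ)⟧')) = 0
      rw [Preadditive.comp_neg, this, neg_zero]
    obtain ⟨ψ, hψ⟩ := Triangle.coyoneda_exact₂ _ hrot φ hcomp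
    have hψ0 : ψ = 0 := h1.orth x hx b hb ψ
    rw [hψ, hψ0, zero_comp]
    rfl
  · -- a⟦1⟧ ∈ ^⊥(Y⟦1⟧)
    rintro _ ⟨y, hy, rfl⟩ φ
    have : φ = (CategoryTheory.shiftFunctor T (1:ℤ)).map
        ((CategoryTheory.shiftFunctor T (1:ℤ)).preimage φ) :=
      (Functor.map_preimage _ _).symm
    rw [this, ha y hy ((CategoryTheory.shiftFunctor T (1:ℤ)).preimage φ), Functor.map_zero]
  · -- Q.obj T₀ ≅ Q.obj (a⟦1⟧)
    -- triangle a⟦1⟧ → t₁ → b⟦1⟧ → a⟦1⟧⟦1⟧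
    set φ : a⟦(1:ℤ)⟧ ⟶ t₁ := Tr2s.mor₁ ≫ e.hom with hφdef
    have hTr3 : Triangle.mk φ (e.inv ≫ Tr2s.mor₂) Tr2s.mor₃ ∈ distTriang T := by
      refine isomorphic_distinguished _ hTr2s _ ?_
      exact Triangle.isoMk _ _ (Iso.refl _) e.symm (Iso.refl _)
        (by exact (Category.assoc Tr2s.mor₁ e.hom e.inv).trans ((congrArg (fun g => Tr2s.mor₁ ≫ g) e.hom_inv_id).trans ((Category.comp_id _).trans (Category.id_comp _).symm)))
        (by exact Category.comp_id _)
        (by exact (congrArg (fun g => Tr2s.mor₃ ≫ g) ((CategoryTheory.shiftFunctor T (1:ℤ)).map_id Tr2s.obj₁)).trans ((Category.comp_id _).trans (Category.id_comp _).symm))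
    have hqis₂ : qis S φ :=
      ⟨b⟦(1:ℤ)⟧, e.inv ≫ Tr2s.mor₂, Tr2s.mor₃, hTr3,
        hS.shift _ (h1.subB hb) 1⟩
    have hiso₂ : IsIso (Q.map φ) := Localization.inverts Q (qis S) φ hqis₂
    exact ⟨asIso (Q.map g₁) ≪≫ (asIso (Q.map φ)).symm⟩


end IY
end

section
/- Let T be a triangulated category, S a thick subcategory with a torsion pair S = X ⊥ Y, and T with torsion pairs T = X ⊥ X^⊥ = ^⊥Y ⊥ Y. If additionally X[1] ⊆ X (i.e. S = X ⊥ Y is a co-t-structure), then X[1] ⊆ X * P and Y ⊆ P * Y[1], where P := X[1] ∩ Y. -/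
open CategoryTheory Limits Pretriangulated ZeroObject

namespace IY

variable {T : Type*} [Category T] [Preadditive T] [HasZeroObject T] [HasShift T ℤ]
  [∀ n : ℤ, (shiftFunctor T n).Additive] [Pretriangulated T]

lemma leftPerp_iso {B : Set T} {a b : T} (e : a ≅ b) (ha : a ∈ leftPerp B) :
    b ∈ leftPerp B := by
  intro z hz f
  have h0 : e.hom ≫ f = 0 := ha z hz _
  have : f = e.inv ≫ (e.hom ≫ f) := by simp
  rw [this, h0, comp_zero]

lemma rightPerp_iso {A : Set T} {a b : T} (e : a ≅ b) (ha : a ∈ rightPerp A) :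
    b ∈ rightPerp A := by
  intro z hz f
  have h0 : f ≫ e.inv = 0 := ha z hz _
  have : f = (f ≫ e.inv) ≫ e.hom := by simp
  rw [this, h0, zero_comp]

lemma shift_hom_zero {a b : T} (h : ∀ f : a ⟶ b, f = 0)
    (φ : (a⟦(1 : ℤ)⟧ : T) ⟶ (b⟦(1 : ℤ)⟧ : T)) : φ = 0 := by
  obtain ⟨ψ, rfl⟩ := (shiftFunctor T (1 : ℤ)).map_surjective φ
  rw [h ψ, Functor.map_zero]

/-- If moreover `X[1] ⊆ X` (co-t-structure case), then
`X[1] ⊆ X * P` and `Y ⊆ P * Y[1]`, where `P = X[1] ∩ Y`. -/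
theorem stmt3 (S X Y : Set T) (hS : IsThick S)
    (h1 : IsTorsionPair S X Y) (hco : shiftSet X 1 ⊆ X)
    (h2 : IsTorsionPair Set.univ X (rightPerp X))
    (h3 : IsTorsionPair Set.univ (leftPerp Y) Y) :
    shiftSet X 1 ⊆ starSet X (shiftSet X 1 ∩ Y) ∧
    Y ⊆ starSet (shiftSet X 1 ∩ Y) (shiftSet Y 1) := by
  have hYiso : ∀ ⦃a b : T⦄, (a ≅ b) → a ∈ Y → b ∈ Y := by
    intro a b e ha
    rw [h1.eqB] at ha ⊢
    exact ⟨rightPerp_iso e ha.1, hS.iso e ha.2⟩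
  constructor
  · rintro E ⟨e, he, rfl⟩
    have hES : (e⟦(1 : ℤ)⟧ : T) ∈ S := hS.shift e (h1.subA he) 1
    obtain ⟨x, yy, hx, hy, f, g, h, hT⟩ := h1.ext hES
    have claim : ∀ z ∈ Y, ∀ φ : yy ⟶ (z⟦(1 : ℤ)⟧ : T), φ = 0 := by
      intro z hz φ
      obtain ⟨ξ, hξ⟩ := Triangle.yoneda_exact₃ _ hT φ
        (shift_hom_zero (fun ψ => h1.orth e he z hz ψ) _)
      rw [hξ, shift_hom_zero (fun ψ => h1.orth x hx z hz ψ) ξ]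
      exact comp_zero
    set ι : ((yy⟦(-1 : ℤ)⟧ : T)⟦(1 : ℤ)⟧ : T) ≅ yy :=
      (shiftFunctorCompIsoId T (-1 : ℤ) (1 : ℤ) (by omega)).app yy with hι
    have hyyX : (yy⟦(-1 : ℤ)⟧ : T) ∈ X := by
      rw [h1.eqA]
      refine ⟨?_, hS.shift yy (h1.subB hy) _⟩
      intro z hz φ
      apply (shiftFunctor T (1 : ℤ)).map_injective
      have h0 : ι.inv ≫ (shiftFunctor T (1 : ℤ)).map φ = 0 := claim z hz _
      have : (shiftFunctor T (1 : ℤ)).map φ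
          = ι.hom ≫ (ι.inv ≫ (shiftFunctor T (1 : ℤ)).map φ) := by simp
      rw [this, h0, comp_zero, Functor.map_zero]
    have hbY : ((yy⟦(-1 : ℤ)⟧ : T)⟦(1 : ℤ)⟧ : T) ∈ Y := hYiso ι.symm hy
    refine ⟨x, _, hx, ⟨⟨yy⟦(-1 : ℤ)⟧, hyyX, rfl⟩, hbY⟩, f, g ≫ ι.inv, ι.hom ≫ h, ?_⟩
    refine isomorphic_distinguished _ hT _ ?_
    exact Triangle.isoMk _ _ (Iso.refl _) (Iso.refl _) ι
      (by exact (Category.comp_id _).trans (Category.id_comp _).symm)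
      (by exact (Category.assoc _ _ _).trans ((congrArg _ ι.inv_hom_id).trans ((Category.comp_id _).trans (Category.id_comp _).symm)))
      (by exact (congrArg _ (CategoryTheory.Functor.map_id _ _)).trans (Category.comp_id _))
  · intro y hy
    have hyS : (y⟦(-1 : ℤ)⟧ : T) ∈ S := hS.shift y (h1.subB hy) _
    obtain ⟨x, z, hx, hz, f, g, h, hT⟩ := h1.ext hyS
    have hT3 := rot_of_distTriang _ (rot_of_distTriang _ hT)
    set ι : ((y⟦(-1 : ℤ)⟧ : T)⟦(1 : ℤ)⟧ : T) ≅ y :=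
      (shiftFunctorCompIsoId T (-1 : ℤ) (1 : ℤ) (by omega)).app y with hι
    have hyiso : ((y⟦(-1 : ℤ)⟧ : T)⟦(1 : ℤ)⟧ : T) ∈ Y := hYiso ι.symm hy
    have hx1Y : (x⟦(1 : ℤ)⟧ : T) ∈ Y := by
      rw [h1.eqB]
      refine ⟨?_, hS.shift x (h1.subA hx) _⟩
      intro w hw φ
      obtain ⟨ξ, hξ⟩ := Triangle.coyoneda_exact₂ _ hT3 φ (h1.orth w hw _ hyiso _)
      rw [hξ, h1.orth w hw z hz ξ]
      exact zero_comp
    have hT4 := rot_of_distTriang _ hT3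
    set T4 := ((Triangle.mk f g h).rotate.rotate).rotate with hT4def
    refine ⟨x⟦(1 : ℤ)⟧, z⟦(1 : ℤ)⟧, ⟨⟨x, hx, rfl⟩, hx1Y⟩, ⟨z, hz, rfl⟩,
      T4.mor₁ ≫ ι.hom, ι.inv ≫ T4.mor₂, T4.mor₃, ?_⟩
    refine isomorphic_distinguished _ hT4 _ ?_
    exact Triangle.isoMk _ _ (Iso.refl _) ι.symm (Iso.refl _)
      (by exact (Category.assoc _ _ _).trans ((congrArg _ ι.hom_inv_id).trans ((Category.comp_id _).trans (Category.id_comp _).symm)))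
      (by exact Category.comp_id _)
      (by exact (congrArg _ (CategoryTheory.Functor.map_id _ _)).trans ((Category.comp_id _).trans (Category.id_comp _).symm))



end IY
end

section
/- Let T be a triangulated category, S a thick subcategory with a co-t-structure S = X ⊥ Y (torsion pair with X[1] ⊆ X), and T with torsion pairs T = X ⊥ X^⊥ = ^⊥Y ⊥ Y. Set Z := X^⊥ ∩ ^⊥(Y[1]) and P := X[1] ∩ Y. Then P ⊆ Z and Hom_T(P, Z[1]) = 0 = Hom_T(Z, P[1]). -/
open CategoryTheory Limits Pretriangulated ZeroObject

namespace IY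

variable {T : Type*} [Category T] [Preadditive T] [HasZeroObject T] [HasShift T ℤ]
  [∀ n : ℤ, (shiftFunctor T n).Additive] [Pretriangulated T]

/-- In the co-t-structure case, `P ⊆ Z` and
`Hom(P, Z[1]) = 0 = Hom(Z, P[1])`, where `Z = X^⊥ ∩ ^⊥(Y[1])` and `P = X[1] ∩ Y`. -/
theorem stmt4 (S X Y : Set T) (hS : IsThick S)
    (h1 : IsTorsionPair S X Y) (hco : shiftSet X 1 ⊆ X)
    (h2 : IsTorsionPair Set.univ X (rightPerp X))
    (h3 : IsTorsionPair Set.univ (leftPerp Y) Y) :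
    shiftSet X 1 ∩ Y ⊆ rightPerp X ∩ leftPerp (shiftSet Y 1) ∧
    homOrth (shiftSet X 1 ∩ Y) (shiftSet (rightPerp X ∩ leftPerp (shiftSet Y 1)) 1) ∧
    homOrth (rightPerp X ∩ leftPerp (shiftSet Y 1)) (shiftSet (shiftSet X 1 ∩ Y) 1) := by
  have key : ∀ {x y : T}, (∀ g : x ⟶ y, g = 0) →
      ∀ f : (x⟦(1:ℤ)⟧ : T) ⟶ (y⟦(1:ℤ)⟧ : T), f = 0 := by
    intro x y h f
    have := (shiftFunctor T (1:ℤ)).map_preimage f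
    rw [← this, h ((shiftFunctor T (1:ℤ)).preimage f), Functor.map_zero]
  refine ⟨?_, ?_, ?_⟩
  · rintro p ⟨⟨x, hx, rfl⟩, hpY⟩
    constructor
    · intro x' hx' f
      exact h1.orth x' hx' _ hpY f
    · rintro w ⟨y, hy, rfl⟩ f
      exact key (fun g => h1.orth x hx y hy g) f
  · rintro p ⟨⟨x, hx, rfl⟩, hpY⟩ w ⟨z, ⟨hz1, hz2⟩, rfl⟩ f
    exact key (fun g => hz1 x hx g) f
  · rintro z ⟨hz1, hz2⟩ w ⟨p, ⟨hp1, hp2⟩, rfl⟩ f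
    exact hz2 _ ⟨p, hp2, rfl⟩ f


end IY
end

section
/- Let T be a triangulated category, S a thick subcategory, and suppose S = X ⊥ Y = X' ⊥ Y' are torsion pairs of S and T = X' ⊥ X'^⊥ is a torsion pair of T. If X[n] ⊆ X' for some integer n, then T = X ⊥ X^⊥ is a torsion pair of T. -/
open CategoryTheory Limits Pretriangulated ZeroObject

namespace IY

variable {T : Type*} [Category T] [Preadditive T] [HasZeroObject T] [HasShift T ℤ]
  [∀ n : ℤ, (shiftFunctor T n).Additive] [Pretriangulated T]

/-- If `S = X ⊥ Y = X' ⊥ Y'` are torsion pairs of the thick subcategory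
`S`, `T = X' ⊥ X'^⊥` is a torsion pair of `T` and `X[n] ⊆ X'` for some `n`, then
`T = X ⊥ X^⊥` is a torsion pair of `T`. -/
theorem stmt8 (S X Y X' Y' : Set T) (hS : IsThick S)
    (h1 : IsTorsionPair S X Y) (h1' : IsTorsionPair S X' Y')
    (h2 : IsTorsionPair Set.univ X' (rightPerp X'))
    (n : ℤ) (hn : shiftSet X n ⊆ X') :
    IsTorsionPair Set.univ X (rightPerp X) := by
  -- Main extension property: every `E` fits in a triangle `x ⟶ E ⟶ W` with
  -- `x ∈ X` and `W ∈ X^⊥`.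
  have key : ∀ E : T, E ∈ starSet X (rightPerp X) := by
    intro E
    obtain ⟨a, b, ha, hb, f, g, h, hTr⟩ := h2.ext (Set.mem_univ (E⟦n⟧))
    have hTr' := Pretriangulated.Triangle.shift_distinguished _ hTr (-n)
    rw [Pretriangulated.Triangle.shiftFunctor_eq] at hTr'
    set Tr' := (Pretriangulated.Triangle.shiftFunctor T (-n)).obj (Triangle.mk f g h)
      with hTr'def
    let ε : ((E⟦n⟧)⟦(-n : ℤ)⟧ : T) ≅ E := (shiftFunctorCompIsoId T n (-n) (by omega)).app E
    let Tr₂ : Triangle T := Triangle.mk (Tr'.mor₁ ≫ ε.hom) (ε.inv ≫ Tr'.mor₂) Tr'.mor₃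
    have hTr₂ : Tr₂ ∈ distTriang T := by
      refine isomorphic_distinguished _ hTr' _ ?_
      exact Triangle.isoMk Tr₂ Tr' (Iso.refl _) ε.symm (Iso.refl _)
        (by exact (by simp : ∀ {P Q Z : T} (e : P ≅ Q) (f : Z ⟶ P), (f ≫ e.hom) ≫ e.inv = 𝟙 Z ≫ f) ε Tr'.mor₁)
        (by exact Category.comp_id _)
        (by exact (by simp : ∀ {Z W : T} (k : W ⟶ Z⟦(1 : ℤ)⟧), k ≫ (shiftFunctor T (1 : ℤ)).map (𝟙 Z) = 𝟙 W ≫ k) Tr'.mor₃)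
    have hw : (a⟦(-n : ℤ)⟧ : T) ∈ S := hS.shift a (h1'.subA ha) (-n)
    have hz : (b⟦(-n : ℤ)⟧ : T) ∈ rightPerp X := by
      intro x₀ hx₀ φ
      have hx₀n : (x₀⟦n⟧ : T) ∈ X' := hn ⟨x₀, hx₀, rfl⟩
      have hψ : (φ⟦n⟧' ≫ ((shiftFunctorCompIsoId T (-n) n (by omega)).app b).hom) = 0 :=
        hb _ hx₀n _
      have hφn : (φ⟦n⟧' : (x₀⟦n⟧ : T) ⟶ ((b⟦(-n : ℤ)⟧)⟦n⟧ : T)) = 0 := by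
        have := hψ =≫ ((shiftFunctorCompIsoId T (-n) n (by omega)).app b).inv
        simpa using this
      apply (shiftFunctor T n).map_injective
      simpa using hφn
    obtain ⟨x, y, hx, hy, u, p, δ, hT2⟩ := h1.ext hw
    obtain ⟨W, r, s, hT3⟩ := Pretriangulated.distinguished_cocone_triangle (u ≫ Tr₂.mor₁)
    set T2 : Triangle T := Triangle.mk u p δ with hT2def
    set T3 : Triangle T := Triangle.mk (u ≫ Tr₂.mor₁) r s with hT3def
    have hW : W ∈ rightPerp X := by
      intro x₀ hx₀ fmap
      have hgz : fmap ≫ s = 0 := by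
        have h31 : T3.mor₃ ≫ T3.mor₁⟦1⟧' = 0 :=
          Pretriangulated.comp_distTriang_mor_zero₃₁ _ hT3
        have step1 : ((fmap ≫ s) ≫ (shiftFunctor T (1 : ℤ)).map u) ≫
            (shiftFunctor T (1 : ℤ)).map Tr₂.mor₁ = 0 := by
          have hmc := (shiftFunctor T (1 : ℤ)).map_comp u Tr₂.mor₁
          calc ((fmap ≫ s) ≫ (shiftFunctor T (1 : ℤ)).map u) ≫
                (shiftFunctor T (1 : ℤ)).map Tr₂.mor₁
              = fmap ≫ (s ≫ (shiftFunctor T (1 : ℤ)).map (u ≫ Tr₂.mor₁)) := by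
                rw [hmc]; simp
            _ = 0 := (congrArg (fun k => fmap ≫ k) h31).trans comp_zero
        obtain ⟨t, ht⟩ := Pretriangulated.Triangle.coyoneda_exact₁ Tr₂ hTr₂
          ((fmap ≫ s) ≫ (shiftFunctor T (1 : ℤ)).map u) step1
        have ht0 : t = 0 := hz x₀ hx₀ t
        have hsu : (fmap ≫ s) ≫ (shiftFunctor T (1 : ℤ)).map u = 0 := by
          exact ht.trans (by rw [ht0, zero_comp]; rfl)
        obtain ⟨t', ht'⟩ := Pretriangulated.Triangle.coyoneda_exact₁ T2 hT2
          (fmap ≫ s) hsu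
        have ht'0 : t' = 0 := h1.orth x₀ hx₀ y hy t'
        exact ht'.trans (by rw [ht'0, zero_comp]; rfl)
      obtain ⟨φ, hφ⟩ := Pretriangulated.Triangle.coyoneda_exact₃ T3 hT3 fmap hgz
      have hφz : φ ≫ Tr₂.mor₂ = 0 := hz x₀ hx₀ _
      obtain ⟨ψ, hψ⟩ := Pretriangulated.Triangle.coyoneda_exact₂ Tr₂ hTr₂ φ hφz
      have hψy : ψ ≫ T2.mor₂ = 0 := h1.orth x₀ hx₀ y hy _
      obtain ⟨χ, hχ⟩ := Pretriangulated.Triangle.coyoneda_exact₂ T2 hT2 ψ hψy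
      have h12 : T3.mor₁ ≫ T3.mor₂ = 0 :=
        Pretriangulated.comp_distTriang_mor_zero₁₂ _ hT3
      subst hφ hψ hχ
      have e4 : ∀ {A B C D Z : T} (a : Z ⟶ A) (b : A ⟶ B) (c : B ⟶ C) (d : C ⟶ D),
          ((a ≫ b) ≫ c) ≫ d = a ≫ ((b ≫ c) ≫ d) := by intros; simp
      exact (e4 χ T2.mor₁ Tr₂.mor₁ T3.mor₂).trans
        ((congrArg (fun k => χ ≫ k) (h12 : (T2.mor₁ ≫ Tr₂.mor₁) ≫ T3.mor₂ = 0)).trans comp_zero)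
    exact ⟨x, W, hx, hW, u ≫ Tr₂.mor₁, r, s, hT3⟩
  have hXsub : X ⊆ leftPerp (rightPerp X) := fun x hx w hw fmap => hw x hx fmap
  have hperp : leftPerp (rightPerp X) ⊆ X := by
    intro V hV
    obtain ⟨x, W, hx, hW, c, r, s, hT3⟩ := key V
    have hr0 : r = 0 := hV W hW r
    have hid : 𝟙 V ≫ (Triangle.mk c r s).mor₂ = 0 := by simp [hr0]; exact comp_zero
    obtain ⟨σ, hσ⟩ := Pretriangulated.Triangle.coyoneda_exact₂ _ hT3 (𝟙 V) hid
    have hσc : σ ≫ c = 𝟙 V := hσ.symm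
    rw [h1.eqA]
    constructor
    · intro y₀ hy₀ gmap
      have hxLY : x ∈ leftPerp Y := by
        have hx' := h1.eqA ▸ hx
        exact hx'.1
      calc gmap = (σ ≫ c) ≫ gmap := by rw [hσc, Category.id_comp]
        _ = σ ≫ (c ≫ gmap) := Category.assoc _ _ _
        _ = σ ≫ 0 := congrArg (fun k => σ ≫ k) (hxLY y₀ hy₀ (c ≫ gmap))
        _ = 0 := comp_zero
    · exact hS.retract σ c hσc (h1.subA hx)
  constructor
  · exact fun _ _ => Set.mem_univ _
  · exact fun _ _ => Set.mem_univ _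
  · exact fun x hx w hw fmap => hw x hx fmap
  · exact fun E _ => key E
  · exact Set.Subset.antisymm (fun x hx => ⟨hXsub hx, Set.mem_univ _⟩)
      (fun V hV => hperp hV.1)
  · exact (Set.inter_univ _).symm


end IY
end

section
/- Let (T, S, 𝕊, M) be a relative Serre quadruple. Then S has a t-structure S = X ⊥ Y, where X := (M[<0])^⊥ ∩ S and Y := (M[≥0])^⊥. -/
open CategoryTheory Limits Pretriangulated ZeroObject

namespace IY

variable {T : Type*} [Category T] [Preadditive T] [HasZeroObject T] [HasShift T ℤ]
  [∀ n : ℤ, (shiftFunctor T n).Additive] [Pretriangulated T]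

/-- `P[≥0] = ⋃_{i≥0} P[i]`. -/
def nonnegPart (P : Set T) : Set T := {Z | ∃ X ∈ P, ∃ i : ℤ, 0 ≤ i ∧ Z = (X⟦i⟧ : T)}

/-- `P[≤0] = ⋃_{i≤0} P[i]`. -/
def nonposPart (P : Set T) : Set T := {Z | ∃ X ∈ P, ∃ i : ℤ, i ≤ 0 ∧ Z = (X⟦i⟧ : T)}

/-- The thick closure of a class of objects. -/
def thickClosure (P : Set T) : Set T := ⋂₀ {S | IsThick S ∧ P ⊆ S}

/-- `P` is presilting: `Hom(P, P[i]) = 0` for all `i > 0`. -/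
def presilting (P : Set T) : Prop :=
  ∀ X ∈ P, ∀ Y ∈ P, ∀ i : ℤ, 0 < i → ∀ f : X ⟶ (Y⟦i⟧ : T), f = 0

/-- `P[>0]`. -/
def posPart (P : Set T) : Set T := {Z | ∃ X ∈ P, ∃ i : ℤ, 0 < i ∧ Z = (X⟦i⟧ : T)}

/-- `P[<0]`. -/
def negPart (P : Set T) : Set T := {Z | ∃ X ∈ P, ∃ i : ℤ, i < 0 ∧ Z = (X⟦i⟧ : T)}

end IY

namespace IY

open CategoryTheory.Linear

section Dualizing

variable (k : Type*) [Field k] (A : Type*) [Category A] [Preadditive A]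
  [CategoryTheory.Linear k A]

/-- The functor `Y ↦ D Hom(Y, X)` (covariant in `Y`). -/
def dualHomInto (X : A) : A ⥤ ModuleCat k where
  obj Y := ModuleCat.of k (Module.Dual k (Y ⟶ X))
  map {Y Y'} f := ModuleCat.ofHom (LinearMap.dualMap (leftComp k X f))
  map_id Y := ModuleCat.hom_ext <| LinearMap.ext fun (φ : Module.Dual k (Y ⟶ X)) => LinearMap.ext fun f =>
    congrArg φ (Category.id_comp f)
  map_comp {Y Y' Y''} f g := ModuleCat.hom_ext <| LinearMap.ext fun (φ : Module.Dual k (Y ⟶ X)) =>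
    LinearMap.ext fun h => congrArg φ (Category.assoc f g h)

/-- The functor `Y ↦ D Hom(X, Y)` (contravariant in `Y`). -/
def dualHomFrom (X : A) : Aᵒᵖ ⥤ ModuleCat k where
  obj Y := ModuleCat.of k (Module.Dual k (X ⟶ Y.unop))
  map {Y Y'} f := ModuleCat.ofHom (LinearMap.dualMap (rightComp k X f.unop))
  map_id Y := ModuleCat.hom_ext <| LinearMap.ext fun (φ : Module.Dual k (X ⟶ Y.unop)) => LinearMap.ext fun f =>
    congrArg φ (Category.comp_id f)
  map_comp {Y Y' Y''} f g := ModuleCat.hom_ext <| LinearMap.ext fun (φ : Module.Dual k (X ⟶ Y.unop)) =>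
    LinearMap.ext fun h => congrArg φ (Category.assoc h g.unop f.unop).symm

/-- A contravariant functor `A^op ⥤ mod k` is finitely presented if it is a cokernel of
a morphism of representable functors. -/
def finPresContra (F : Aᵒᵖ ⥤ ModuleCat k) : Prop :=
  ∃ (M₁ M₂ : A) (α : (linearYoneda k A).obj M₁ ⟶ (linearYoneda k A).obj M₂)
    (π : (linearYoneda k A).obj M₂ ⟶ F),
    (∀ X : Aᵒᵖ, Function.Surjective (π.app X)) ∧
    (∀ (X : Aᵒᵖ) (y : ((linearYoneda k A).obj M₂).obj X),
      π.app X y = 0 ↔ ∃ z, α.app X z = y)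

/-- A covariant functor `A ⥤ mod k` is finitely presented if it is a cokernel of
a morphism of corepresentable functors. -/
def finPresCov (F : A ⥤ ModuleCat k) : Prop :=
  ∃ (M₁ M₂ : A) (α : (linearCoyoneda k A).obj (Opposite.op M₁) ⟶
      (linearCoyoneda k A).obj (Opposite.op M₂))
    (π : (linearCoyoneda k A).obj (Opposite.op M₂) ⟶ F),
    (∀ X : A, Function.Surjective (π.app X)) ∧
    (∀ (X : A) (y : (((linearCoyoneda k A).obj (Opposite.op M₂)).obj X : Type _)),
      π.app X y = 0 ↔ ∃ z, α.app X z = y)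

/-- A dualizing `k`-variety: a Hom-finite `k`-category such that the `k`-duals of
representable functors (in both variances) are finitely presented. -/
def IsDualizingVariety : Prop :=
  (∀ X Y : A, FiniteDimensional k (X ⟶ Y)) ∧
  (∀ X : A, finPresCov k A (dualHomInto k A X)) ∧
  (∀ X : A, finPresContra k A (dualHomFrom k A X))

end Dualizing

variable (k : Type*) [Field k]
variable (T : Type*) [Category T] [Preadditive T] [CategoryTheory.Linear k T]
  [HasZeroObject T] [HasShift T ℤ] [∀ n : ℤ, (shiftFunctor T n).Additive]
  [Pretriangulated T]

/-- A relative Serre quadruple `(T, S, 𝕊, M)`. -/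
structure RelSerreQuad where
  /-- (RS0) `T` is Hom-finite. -/
  homFinite : ∀ A B : T, FiniteDimensional k (A ⟶ B)
  /-- (RS0) `T` is Krull–Schmidt (being Hom-finite, this means idempotent complete). -/
  krullSchmidt : IsIdempotentComplete T
  /-- The thick subcategory `S`. -/
  S : Set T
  thickS : IsThick S
  /-- The relative Serre functor `𝕊 : S → S`. -/
  SS : ObjectProperty.FullSubcategory (fun A => A ∈ S) ⥤ ObjectProperty.FullSubcategory (fun A => A ∈ S)
  SSequiv : SS.IsEquivalence
  /-- (RS1) the bifunctorial isomorphism `D Hom_T(X, Y) ≅ Hom_T(Y, 𝕊X)` for `X ∈ S`. -/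
  serre : ∀ (A : ObjectProperty.FullSubcategory (fun A => A ∈ S)) (B : T),
    (B ⟶ (SS.obj A).obj) ≃ₗ[k] Module.Dual k (A.obj ⟶ B)
  serre_natB : ∀ (A : ObjectProperty.FullSubcategory (fun A => A ∈ S)) (B B' : T) (g : B ⟶ B')
      (φ : B' ⟶ (SS.obj A).obj) (f : A.obj ⟶ B),
    serre A B (g ≫ φ) f = serre A B' φ (f ≫ g)
  serre_natA : ∀ (A A' : ObjectProperty.FullSubcategory (fun A => A ∈ S)) (u : A' ⟶ A) (B : T)
      (φ : B ⟶ (SS.obj A').obj) (f : A.obj ⟶ B),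
    serre A B (φ ≫ (SS.map u).hom) f
      = serre A' B φ ((ObjectProperty.ι (fun A => A ∈ S)).map u ≫ f)
  /-- The silting subcategory `M`. -/
  M : Set T
  presiltingM : presilting M
  siltingM : thickClosure M = Set.univ
  /-- (RS2) the t-structure `T = (M[<0])^⊥ ⊥ (M[≥0])^⊥`. -/
  tstr : IsTorsionPair Set.univ (rightPerp (negPart M)) (rightPerp (nonnegPart M))
  tstr_shift : shiftSet (rightPerp (negPart M)) 1 ⊆ rightPerp (negPart M)
  /-- (RS2) `(M[≥0])^⊥ ⊆ S`. -/
  aisle_sub : rightPerp (nonnegPart M) ⊆ S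
  /-- (RS2) `M` is a dualizing `k`-variety. -/
  dualizingM : IsDualizingVariety k (ObjectProperty.FullSubcategory (fun A => A ∈ M))


/-- For a relative Serre quadruple `(T, S, 𝕊, M)`, `S` has a
t-structure `S = X ⊥ Y` with `X = (M[<0])^⊥ ∩ S` and `Y = (M[≥0])^⊥`. -/
theorem stmt18 (R : RelSerreQuad k T) :
    IsTorsionPair R.S (rightPerp (negPart R.M) ∩ R.S) (rightPerp (nonnegPart R.M)) ∧
    shiftSet (rightPerp (negPart R.M) ∩ R.S) 1 ⊆ rightPerp (negPart R.M) ∩ R.S := by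
  have hYS : rightPerp (nonnegPart R.M) ⊆ R.S := R.aisle_sub
  -- key: from a triangle a → E → b with E, b ∈ S, we get a ∈ S
  have firstInS : ∀ (a E b : T) (f : a ⟶ E) (g : E ⟶ b) (h : b ⟶ a⟦(1:ℤ)⟧),
      (Triangle.mk f g h ∈ distTriang T) → E ∈ R.S → b ∈ R.S → a ∈ R.S := by
    intro a E b f g h hT hE hb
    exact R.thickS.ext₂ (Triangle.mk f g h).invRotate (inv_rot_of_distTriang _ hT)
      (R.thickS.shift b hb (-1)) hE
  constructor
  · constructor
    · exact fun x hx => hx.2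
    · exact hYS
    · intro x hx y hy f
      exact R.tstr.orth x hx.1 y hy f
    · -- extension
      intro E hE
      obtain ⟨a, b, ha, hb, f, g, h, hT⟩ := R.tstr.ext (Set.mem_univ E)
      exact ⟨a, b, ⟨ha, firstInS a E b f g h hT hE (hYS hb)⟩, hb, f, g, h, hT⟩
    · -- eqA
      have heq := R.tstr.eqA
      ext x
      constructor
      · rintro ⟨hx, hxS⟩
        rw [heq] at hx
        exact ⟨hx.1, hxS⟩
      · rintro ⟨hx, hxS⟩
        refine ⟨?_, hxS⟩
        rw [heq]
        exact ⟨hx, Set.mem_univ _⟩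
    · -- eqB
      ext Z
      constructor
      · intro hZ
        refine ⟨?_, hYS hZ⟩
        intro x hx f
        have heq := R.tstr.eqB
        rw [heq] at hZ
        exact hZ.1 x hx.1 f
      · rintro ⟨hZperp, hZS⟩
        obtain ⟨a, b, ha, hb, f, g, h, hT⟩ := R.tstr.ext (Set.mem_univ Z)
        have haS : a ∈ R.S := firstInS a Z b f g h hT hZS (hYS hb)
        have hf : f = 0 := hZperp a ⟨ha, haS⟩ f
        obtain ⟨r, hr⟩ := Triangle.yoneda_exact₂ _ hT (𝟙 Z)
          (by rw [show (Triangle.mk f g h).mor₁ = f from rfl, hf]; exact zero_comp)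
        intro m hm φ
        have hz : φ ≫ (𝟙 Z) = 0 := by
          rw [show φ ≫ 𝟙 Z = (φ ≫ g) ≫ (r : b ⟶ Z) from (congrArg (φ ≫ ·) hr).trans (Category.assoc _ _ _).symm]
          have hφg : φ ≫ g = 0 := hb m hm (φ ≫ g)
          rw [hφg]; exact zero_comp
        simpa using hz
  · -- shift stability
    rintro z ⟨x, hx, rfl⟩
    exact ⟨R.tstr_shift ⟨x, hx.1, rfl⟩, R.thickS.shift x hx.2 1⟩

end IY
end
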